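/- For fixed a > 0 and u ∈ ℂ^m with |u| < a/√N, the function f_N(u) = N log(1 + |u|²) satisfies: for every k ≥ 2, sup over the ball of the norms of all k-th order real partial derivatives of f_N is O(N) when k is even and O(√N) when k is odd, and moreover these bounds are sharp (achieved up to constants) for k even and for k ∈ {1,3}. -/

import Mathlib

open Filter

section Aux

open Set

/-! ### Complex auxiliary lemmas -/

private lemma aux_ne1 (t : ℝ) : (t:ℂ) + Complex.I ≠ 0 := by
  intro h
  have := congrArg Complex.im h
  simp at this

private lemma aux_ne2 (t : ℝ) : (t:ℂ) - Complex.I ≠ 0 := by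
  intro h
  have := congrArg Complex.im h
  simp at this

private lemma cprod (t : ℝ) : ((t:ℂ)+Complex.I)*((t:ℂ)-Complex.I) = (t:ℂ)^2+1 := by
  have h : ((t:ℂ)+Complex.I)*((t:ℂ)-Complex.I) = (t:ℂ)^2 - Complex.I^2 := by ring
  rw [h, Complex.I_sq]; ring

private lemma hasDerivAt_zpow_add (c : ℂ) (n : ℤ) (z : ℂ) (h : z + c ≠ 0) :
    HasDerivAt (fun w : ℂ => (w + c) ^ n) ((n:ℂ) * (z + c) ^ (n - 1)) z := by
  have h1 : HasDerivAt (fun w : ℂ => w + c) 1 z := (hasDerivAt_id z).add_const c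
  have h2 := hasDerivAt_zpow n (z + c) (Or.inl h)
  simpa [Function.comp_def] using h2.comp z h1

private lemma hasDerivAt_zpow_sub (c : ℂ) (n : ℤ) (z : ℂ) (h : z - c ≠ 0) :
    HasDerivAt (fun w : ℂ => (w - c) ^ n) ((n:ℂ) * (z - c) ^ (n - 1)) z := by
  simpa [sub_eq_add_neg] using hasDerivAt_zpow_add (-c) n z (by rwa [← sub_eq_add_neg])

/-! ### Iterated derivatives of `log(1+t²)` via a complex representation -/

private lemma iteratedDeriv_logsq (n : ℕ) : ∀ t : ℝ,
    iteratedDeriv (n+1) (fun s : ℝ => Real.log (1+s^2)) t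
      = ((-1:ℂ)^n * (n.factorial) * (((t:ℂ)+Complex.I)^(-(n+1):ℤ)
          + ((t:ℂ)-Complex.I)^(-(n+1):ℤ))).re := by
  induction n with
  | zero =>
    intro t
    rw [iteratedDeriv_one]
    have h1 : HasDerivAt (fun s : ℝ => 1 + s^2) (2*t) t := by
      simpa using ((hasDerivAt_pow 2 t).const_add 1)
    have hd : HasDerivAt (fun s : ℝ => Real.log (1+s^2)) (2*t/(1+t^2)) t := by
      simpa using h1.log (by positivity)
    rw [hd.deriv]
    have h3 : ((t:ℂ)^2 + 1) ≠ 0 := by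
      rw [← cprod]; exact mul_ne_zero (aux_ne1 t) (aux_ne2 t)
    have h4 : ((1:ℂ) + (t:ℂ)^2) ≠ 0 := by
      intro h; apply h3; linear_combination h
    have key : ((t:ℂ)+Complex.I)^(-1:ℤ) + ((t:ℂ)-Complex.I)^(-1:ℤ)
        = ((2*t/(1+t^2) : ℝ) : ℂ) := by
      rw [zpow_neg_one, zpow_neg_one, inv_add_inv (aux_ne1 t) (aux_ne2 t), cprod]
      push_cast
      rw [div_eq_div_iff h3 h4]
      ring
    simp only [pow_zero, Nat.factorial_zero, Nat.cast_one, one_mul, Nat.cast_zero, zero_add]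
    rw [key, Complex.ofReal_re]
  | succ n ih =>
    intro t
    rw [iteratedDeriv_succ]
    have hfun : iteratedDeriv (n+1) (fun s : ℝ => Real.log (1+s^2))
        = fun s : ℝ => (((-1:ℂ)^n * (n.factorial) * (((s:ℂ)+Complex.I)^(-(n+1):ℤ)
            + ((s:ℂ)-Complex.I)^(-(n+1):ℤ)))).re := funext fun s => ih s
    rw [hfun]
    have he : HasDerivAt (fun z : ℂ => (-1:ℂ)^n * (n.factorial) * ((z+Complex.I)^(-(n+1):ℤ)
        + (z-Complex.I)^(-(n+1):ℤ))) ((-1:ℂ)^n * (n.factorial) *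
        (((-(n+1):ℤ):ℂ) * (((t:ℂ)+Complex.I)^(-(n+1)-1:ℤ)
          + ((t:ℂ)-Complex.I)^(-(n+1)-1:ℤ)))) (t:ℂ) := by
      have ha := hasDerivAt_zpow_add Complex.I (-(n+1):ℤ) (t:ℂ) (aux_ne1 t)
      have hb := hasDerivAt_zpow_sub Complex.I (-(n+1):ℤ) (t:ℂ) (aux_ne2 t)
      have h := ((ha.add hb).const_mul ((-1:ℂ)^n * (n.factorial)))
      exact h.congr_deriv (by ring)
    have hR := he.real_of_complex
    rw [hR.deriv]
    have harg : (-(n+1) - 1 : ℤ) = (-(n+1+1) : ℤ) := by ring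
    rw [harg]
    congr 1
    push_cast [Nat.factorial_succ]
    ring

private lemma hasDerivAt_logsq (t : ℝ) :
    HasDerivAt (fun s : ℝ => Real.log (1+s^2)) (2*t/(1+t^2)) t := by
  have h1 : HasDerivAt (fun s : ℝ => 1 + s^2) (2*t) t := by
    simpa using ((hasDerivAt_pow 2 t).const_add 1)
  simpa using h1.log (by positivity)

private lemma contDiff_logsq (n : ℕ∞) : ContDiff ℝ n (fun s : ℝ => Real.log (1+s^2)) := by
  have h1 : ContDiff ℝ n (fun s : ℝ => 1 + s^2) := contDiff_const.add (contDiff_id.pow 2)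
  exact h1.log fun s => by positivity

private lemma iteratedDeriv_cmul (c : ℝ) (g : ℝ → ℝ) (k : ℕ) (hg : ContDiff ℝ (k:ℕ∞) g)
    (x : ℝ) : iteratedDeriv k (fun s => c * g s) x = c * iteratedDeriv k g x := by
  have h : (fun s => c * g s) = c • g := by funext s; simp
  rw [h, iteratedDeriv_eq_iteratedFDeriv, iteratedFDeriv_const_smul_apply hg.contDiffAt,
    ContinuousMultilinearMap.smul_apply, smul_eq_mul, ← iteratedDeriv_eq_iteratedFDeriv]

/-- Value of the even-order derivative of `log(1+t²)` at `0`. -/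
private lemma even_value (k : ℕ) (hk2 : 2 ≤ k) (hke : Even k) :
    |iteratedDeriv k (fun s : ℝ => Real.log (1+s^2)) 0| = 2 * (k-1).factorial := by
  obtain ⟨l, hl⟩ := hke
  have hk1 : k - 1 + 1 = k := by omega
  have hval := iteratedDeriv_logsq (k-1) 0
  rw [hk1] at hval
  have hcast : (-(((k-1:ℕ):ℤ)+1)) = -(k:ℤ) := by omega
  rw [hval]
  simp only [Complex.ofReal_zero, zero_add, zero_sub]
  rw [hcast]
  have hinv : ∀ z : ℂ, z * z = -1 → z^(-(k:ℤ)) = (-1:ℂ)^l := by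
    intro z hz
    rw [zpow_neg, zpow_natCast, hl, ← two_mul, pow_mul,
      show z^2 = -1 by rw [sq]; exact hz]
    exact inv_eq_of_mul_eq_one_right (by rw [← mul_pow]; norm_num)
  have hIk : (Complex.I)^(-(k:ℤ)) = ((-1:ℂ))^l := hinv _ Complex.I_mul_I
  have hIk2 : (-Complex.I)^(-(k:ℤ)) = ((-1:ℂ))^l := hinv _ (by
    rw [neg_mul_neg]; exact Complex.I_mul_I)
  rw [hIk, hIk2]
  have hre : (((-1:ℂ))^(k-1) * (((k-1).factorial : ℕ):ℂ) * ((-1:ℂ)^l + (-1:ℂ)^l))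
      = ((((-1:ℝ))^(k-1) * ((k-1).factorial:ℝ) * ((-1:ℝ)^l + (-1:ℝ)^l) : ℝ) : ℂ) := by
    push_cast; ring
  rw [hre, Complex.ofReal_re]
  rw [show ((-1:ℝ))^(k-1) * ((k-1).factorial:ℝ) * ((-1:ℝ)^l + (-1:ℝ)^l)
      = ((-1:ℝ))^(k-1) * (-1:ℝ)^l * (2 * (k-1).factorial) by ring]
  rw [abs_mul, abs_mul, abs_pow, abs_pow, abs_neg, abs_one, one_pow, one_pow, one_mul, one_mul]
  rw [abs_of_nonneg (by positivity : (0:ℝ) ≤ 2 * ((k-1).factorial:ℝ))]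

/-- Value of the third derivative of `log(1+t²)`. -/
private lemma third_value (t : ℝ) :
    iteratedDeriv 3 (fun s : ℝ => Real.log (1+s^2)) t = (4*t^3-12*t)/(1+t^2)^3 := by
  have hval := iteratedDeriv_logsq 2 t
  have hcast : (-((2:ℕ)+1) : ℤ) = -((3:ℕ):ℤ) := by norm_num
  rw [hcast] at hval
  have h1 : (((t:ℂ)+Complex.I)^(3:ℕ)) ≠ 0 := pow_ne_zero _ (aux_ne1 t)
  have h2 : (((t:ℂ)-Complex.I)^(3:ℕ)) ≠ 0 := pow_ne_zero _ (aux_ne2 t)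
  have hden : ((t:ℂ)^2+1)^(3:ℕ) ≠ 0 := by rw [← cprod, mul_pow]; exact mul_ne_zero h1 h2
  have hden' : ((1:ℂ)+(t:ℂ)^2)^3 ≠ 0 := by
    intro h
    apply hden
    rw [show ((t:ℂ)^2+1)^3 = ((1:ℂ)+(t:ℂ)^2)^3 from by ring]
    exact h
  have hsum : ((t:ℂ)+Complex.I)^(-((3:ℕ):ℤ)) + ((t:ℂ)-Complex.I)^(-((3:ℕ):ℤ))
      = (((2*t^3-6*t)/(1+t^2)^3 : ℝ) : ℂ) := by
    rw [zpow_neg, zpow_neg, zpow_natCast, zpow_natCast, inv_add_inv h1 h2]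
    have hnum : ((t:ℂ)+Complex.I)^3 + ((t:ℂ)-Complex.I)^3
        = 2*(t:ℂ)^3 + 6*(t:ℂ)*Complex.I^2 := by ring
    have hd : ((t:ℂ)+Complex.I)^3 * ((t:ℂ)-Complex.I)^3 = ((t:ℂ)^2+1)^3 := by
      rw [← mul_pow, cprod]
    rw [hnum, Complex.I_sq, hd]
    push_cast
    rw [div_eq_div_iff hden hden']
    ring
  rw [hsum] at hval
  rw [show iteratedDeriv 3 (fun s : ℝ => Real.log (1+s^2)) t
      = iteratedDeriv (2+1) (fun s : ℝ => Real.log (1+s^2)) t from rfl, hval]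
  have hfin : ((-1:ℂ))^2 * ((Nat.factorial 2 : ℕ):ℂ) * (((2*t^3-6*t)/(1+t^2)^3 : ℝ) : ℂ)
      = (((4*t^3-12*t)/(1+t^2)^3 : ℝ) : ℂ) := by
    have hfac : ((Nat.factorial 2 : ℕ):ℂ) = 2 := by norm_num [Nat.factorial]
    rw [hfac]
    push_cast
    rw [← mul_div_assoc, div_eq_div_iff hden' hden']
    ring
  rw [hfin, Complex.ofReal_re]

end Aux

/-- The model function `f_N(u) = N log(1 + |u|²)` on `ℂ^m`. -/
noncomputable def fFS (m N : ℕ) (u : EuclideanSpace ℂ (Fin m)) : ℝ :=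
  (N : ℝ) * Real.log (1 + ‖u‖ ^ 2)

section Main

open Set

private lemma contDiff_fFS (m N : ℕ) (n : ℕ∞) : ContDiff ℝ n (fFS m N) := by
  have h1 : ContDiff ℝ n (fun u : EuclideanSpace ℂ (Fin m) => 1 + ‖u‖^2) :=
    contDiff_const.add (contDiff_norm_sq ℂ)
  exact contDiff_const.mul (h1.log fun u => by positivity)

private lemma sqrtN_ge_one {N : ℕ} (hN : 1 ≤ N) : 1 ≤ Real.sqrt N := by
  rw [show (1:ℝ) = Real.sqrt 1 by simp]
  exact Real.sqrt_le_sqrt (by exact_mod_cast hN)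

private lemma normsq_lt {N : ℕ} {a : ℝ} {E : Type*} [NormedAddCommGroup E] (u : E)
    (hN : 1 ≤ N) (hu : ‖u‖ < a / Real.sqrt N) : ‖u‖^2 ≤ a^2 / N := by
  have hs : (0:ℝ) < Real.sqrt N := lt_of_lt_of_le one_pos (sqrtN_ge_one hN)
  have h1 : ‖u‖^2 ≤ (a / Real.sqrt N)^2 := by
    have := sq_le_sq' (by nlinarith [norm_nonneg u]) hu.le
    simpa using this
  have h2 : (a / Real.sqrt N)^2 = a^2 / N := by
    rw [div_pow, Real.sq_sqrt (by positivity : (0:ℝ) ≤ (N:ℝ))]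
  linarith [h1, h2.le]

/-! ### Derivative bounds for `‖·‖²` -/

private lemma iter_clog (c : ℝ) (i : ℕ) : ∀ t : ℝ, -1 < t →
    iteratedDeriv (i+1) (fun s : ℝ => c * Real.log (1+s)) t
      = c * ((-1:ℝ)^i * i.factorial * ((1+t)^(i+1))⁻¹) := by
  induction i with
  | zero =>
    intro t ht
    have h0 : (1:ℝ) + t ≠ 0 := by linarith
    rw [iteratedDeriv_one]
    have h1 : HasDerivAt (fun s : ℝ => 1 + s) 1 t := (hasDerivAt_id t).const_add 1
    have hd : HasDerivAt (fun s : ℝ => c * Real.log (1+s)) (c * (1/(1+t))) t :=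
      (h1.log h0).const_mul c
    rw [hd.deriv]
    simp
  | succ i ih =>
    intro t ht
    rw [iteratedDeriv_succ]
    have hev : iteratedDeriv (i+1) (fun s : ℝ => c * Real.log (1+s))
        =ᶠ[nhds t] fun s => c * ((-1:ℝ)^i * i.factorial * ((1+s)^(i+1))⁻¹) := by
      filter_upwards [isOpen_Ioi.mem_nhds (show t ∈ Ioi (-1:ℝ) from ht)] with s hs
      exact ih s hs
    rw [hev.deriv_eq]
    have h0 : (1:ℝ) + t ≠ 0 := by linarith
    have hp : HasDerivAt (fun s : ℝ => (1+s)^(i+1)) ((i+1) * (1+t)^i) t := by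
      have h1 : HasDerivAt (fun s : ℝ => 1 + s) 1 t := (hasDerivAt_id t).const_add 1
      simpa [Pi.pow_def] using h1.pow (i+1)
    have hd : HasDerivAt (fun s : ℝ => c * ((-1:ℝ)^i * i.factorial * ((1+s)^(i+1))⁻¹))
        (c * ((-1:ℝ)^i * i.factorial * (-((i+1) * (1+t)^i) / ((1+t)^(i+1))^2))) t := by
      exact ((hp.inv (pow_ne_zero _ h0)).const_mul _).const_mul c
    rw [hd.deriv]
    push_cast [Nat.factorial_succ]
    have hne : ((1:ℝ)+t)^(i+1) ≠ 0 := pow_ne_zero _ h0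
    have hne2 : ((1:ℝ)+t)^(i+1+1) ≠ 0 := pow_ne_zero _ h0
    field_simp
    ring

private lemma iter_clog_bound (c : ℝ) (i : ℕ) (t : ℝ) (ht : 0 ≤ t) :
    |iteratedDeriv (i+1) (fun s : ℝ => c * Real.log (1+s)) t| ≤ |c| * i.factorial := by
  rw [iter_clog c i t (by linarith)]
  have h1 : (1:ℝ) ≤ (1+t)^(i+1) := one_le_pow₀ (by linarith)
  have h2 : |((1+t)^(i+1))⁻¹| ≤ 1 := by
    rw [abs_of_nonneg (by positivity)]
    exact inv_le_one_of_one_le₀ h1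
  calc |c * ((-1:ℝ)^i * i.factorial * ((1+t)^(i+1))⁻¹)|
      = |c| * (1 * i.factorial * |((1+t)^(i+1))⁻¹|) := by
        rw [abs_mul, abs_mul, abs_mul, abs_pow, abs_neg, abs_one, one_pow, abs_of_nonneg
          (by positivity : (0:ℝ) ≤ (i.factorial:ℝ))]
    _ ≤ |c| * (1 * i.factorial * 1) := by
        apply mul_le_mul_of_nonneg_left _ (abs_nonneg c)
        apply mul_le_mul_of_nonneg_left h2 (by positivity)
    _ = |c| * i.factorial := by ring

private lemma norm_iteratedFDeriv_id_ge2 {E : Type*} [NormedAddCommGroup E]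
    [NormedSpace ℝ E] (j : ℕ) (u : E) (hj : 2 ≤ j) :
    ‖iteratedFDeriv ℝ j (fun x : E => x) u‖ = 0 := by
  obtain ⟨n, rfl⟩ : ∃ n, j = n + 1 := ⟨j - 1, by omega⟩
  rw [← norm_iteratedFDeriv_fderiv]
  have hfd : (fderiv ℝ fun x : E => x)
      = fun _ : E => ContinuousLinearMap.id ℝ E := funext fun y => fderiv_id'
  rw [hfd, iteratedFDeriv_const_of_ne (by omega)]
  simp

private lemma norm_iteratedFDeriv_id_one {E : Type*} [NormedAddCommGroup E]
    [NormedSpace ℝ E] (u : E) :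
    ‖iteratedFDeriv ℝ 1 (fun x : E => x) u‖ ≤ 1 := by
  rw [show (1:ℕ) = 0 + 1 from rfl, ← norm_iteratedFDeriv_fderiv]
  have hfd : (fderiv ℝ fun x : E => x)
      = fun _ : E => ContinuousLinearMap.id ℝ E := funext fun y => fderiv_id'
  rw [hfd, norm_iteratedFDeriv_zero]
  exact ContinuousLinearMap.norm_id_le

private lemma norm_iteratedFDeriv_normsq_le {E : Type*} [NormedAddCommGroup E]
    [InnerProductSpace ℂ E] (i : ℕ) (u : E) (hi : 1 ≤ i) :
    ‖iteratedFDeriv ℝ i (fun x : E => ‖x‖^2) u‖ ≤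
      if i = 1 then 2*‖u‖ else if i = 2 then 2 else 0 := by
  letI : InnerProductSpace ℝ E := InnerProductSpace.complexToReal
  have hfun : (fun x : E => ‖x‖^2) = fun x : E => (innerSL ℝ) ((fun y : E => y) x)
      ((fun y : E => y) x) := by
    funext x
    rw [innerSL_apply_apply, real_inner_self_eq_norm_sq]
  rw [hfun]
  have hB : ‖(innerSL ℝ : E →L[ℝ] E →L[ℝ] ℝ)‖ ≤ 1 := norm_innerSL_le ℝ
  have hid : ContDiff ℝ (i : WithTop ℕ∞) (fun y : E => y) := contDiff_id
  have key := (innerSL ℝ : E →L[ℝ] E →L[ℝ] ℝ).norm_iteratedFDeriv_le_of_bilinear_of_le_one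
    hid hid u (le_refl _) hB
  refine key.trans ?_
  rcases Nat.lt_or_ge i 3 with h3 | h3
  · interval_cases i
    · -- i = 1
      rw [if_pos rfl]
      rw [Finset.sum_range_succ, Finset.sum_range_succ, Finset.sum_range_zero]
      have e0 : ‖iteratedFDeriv ℝ 0 (fun y : E => y) u‖ = ‖u‖ := norm_iteratedFDeriv_zero
      have e1 := norm_iteratedFDeriv_id_one u
      have t1 : (Nat.choose 1 0 : ℝ) * ‖iteratedFDeriv ℝ 0 (fun y : E => y) u‖ *
          ‖iteratedFDeriv ℝ (1-0) (fun y : E => y) u‖ ≤ ‖u‖ := by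
        simp only [Nat.choose_zero_right, Nat.cast_one, one_mul, e0]
        calc ‖u‖ * ‖iteratedFDeriv ℝ (1-0) (fun y : E => y) u‖ ≤ ‖u‖ * 1 :=
              mul_le_mul_of_nonneg_left e1 (norm_nonneg u)
          _ = ‖u‖ := mul_one _
      have t2 : (Nat.choose 1 1 : ℝ) * ‖iteratedFDeriv ℝ 1 (fun y : E => y) u‖ *
          ‖iteratedFDeriv ℝ (1-1) (fun y : E => y) u‖ ≤ ‖u‖ := by
        simp only [Nat.choose_self, Nat.cast_one, one_mul, show (1:ℕ)-1 = 0 from rfl, e0]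
        calc ‖iteratedFDeriv ℝ 1 (fun y : E => y) u‖ * ‖u‖ ≤ 1 * ‖u‖ :=
              mul_le_mul_of_nonneg_right e1 (norm_nonneg u)
          _ = ‖u‖ := one_mul _
      linarith
    · -- i = 2
      rw [if_neg (by norm_num : ¬ (2:ℕ) = 1), if_pos rfl]
      rw [Finset.sum_range_succ, Finset.sum_range_succ, Finset.sum_range_succ,
        Finset.sum_range_zero]
      have e0 : ‖iteratedFDeriv ℝ 0 (fun y : E => y) u‖ = ‖u‖ := norm_iteratedFDeriv_zero
      have e1 := norm_iteratedFDeriv_id_one u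
      have e2 := norm_iteratedFDeriv_id_ge2 2 u (le_refl _)
      have t0 : (Nat.choose 2 0 : ℝ) * ‖iteratedFDeriv ℝ 0 (fun y : E => y) u‖ *
          ‖iteratedFDeriv ℝ (2-0) (fun y : E => y) u‖ = 0 := by
        rw [show (2:ℕ)-0 = 2 from rfl, e2]; ring
      have t2 : (Nat.choose 2 2 : ℝ) * ‖iteratedFDeriv ℝ 2 (fun y : E => y) u‖ *
          ‖iteratedFDeriv ℝ (2-2) (fun y : E => y) u‖ = 0 := by
        rw [e2]; ring
      have t1 : (Nat.choose 2 1 : ℝ) * ‖iteratedFDeriv ℝ 1 (fun y : E => y) u‖ *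
          ‖iteratedFDeriv ℝ (2-1) (fun y : E => y) u‖ ≤ 2 := by
        have hc : (Nat.choose 2 1 : ℝ) = 2 := by norm_num
        rw [hc, show (2:ℕ)-1 = 1 from rfl]
        calc (2:ℝ) * ‖iteratedFDeriv ℝ 1 (fun y : E => y) u‖ *
            ‖iteratedFDeriv ℝ 1 (fun y : E => y) u‖ ≤ 2 * 1 * 1 := by
              apply mul_le_mul (by nlinarith [norm_nonneg (iteratedFDeriv ℝ 1 (fun y : E => y) u)])
                e1 (norm_nonneg _) (by norm_num)
          _ = 2 := by norm_num
      linarith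
  · -- i ≥ 3 : every term vanishes
    rw [if_neg (by omega : ¬ i = 1), if_neg (by omega : ¬ i = 2)]
    have hz : ∑ j ∈ Finset.range (i + 1), (i.choose j : ℝ) *
        ‖iteratedFDeriv ℝ j (fun y : E => y) u‖ *
        ‖iteratedFDeriv ℝ (i - j) (fun y : E => y) u‖ = 0 := by
      apply Finset.sum_eq_zero
      intro j hj
      rcases Nat.lt_or_ge j 2 with h2 | h2
      · have hz2 : ‖iteratedFDeriv ℝ (i - j) (fun y : E => y) u‖ = 0 :=
          norm_iteratedFDeriv_id_ge2 _ u (by omega)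
        rw [hz2]; ring
      · rw [norm_iteratedFDeriv_id_ge2 _ u h2]; ring
    rw [hz]

/-! ### The crude upper bound `O(N)` for all orders -/

private lemma crude_bound (m k N : ℕ) (hk : 1 ≤ k) (hN : 1 ≤ N) (a : ℝ) (ha : 0 < a)
    (u : EuclideanSpace ℂ (Fin m)) (hu : ‖u‖ < a / Real.sqrt N) :
    ‖iteratedFDeriv ℝ k (fFS m N) u‖ ≤
      ((k.factorial : ℝ) * (a^2 + k.factorial) * (max 2 (2*a))^k) * N := by
  set g : ℝ → ℝ := fun s => (N:ℝ) * Real.log (1+s) with hg_def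
  set f : EuclideanSpace ℂ (Fin m) → ℝ := fun x => ‖x‖^2 with hf_def
  have hNpos : (0:ℝ) < N := by exact_mod_cast hN
  have hg : ContDiffOn ℝ (k : WithTop ℕ∞) g (Ioi (-1:ℝ)) := by
    intro s hs
    have h1 : ContDiffAt ℝ (k : WithTop ℕ∞) (fun s : ℝ => 1 + s) s :=
      (contDiffAt_const.add contDiffAt_id)
    have h2 : ContDiffAt ℝ (k : WithTop ℕ∞) (fun s : ℝ => Real.log (1 + s)) s :=
      h1.log (by simp only [mem_Ioi] at hs; intro h; linarith [hs])
    exact (contDiffAt_const.mul h2).contDiffWithinAt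
  have hf : ContDiffOn ℝ (k : WithTop ℕ∞) f univ := (contDiff_norm_sq ℂ).contDiffOn
  have hst : MapsTo f univ (Ioi (-1:ℝ)) := by
    intro x _
    have := sq_nonneg ‖x‖
    simp only [mem_Ioi, hf_def]
    nlinarith
  have htu : f u ∈ Ioi (-1:ℝ) := hst (mem_univ u)
  have hfu0 : 0 ≤ f u := sq_nonneg ‖u‖
  have hfua : f u ≤ a^2 / N := normsq_lt u hN hu
  have hC : ∀ i, i ≤ k →
      ‖iteratedFDerivWithin ℝ i g (Ioi (-1:ℝ)) (f u)‖ ≤ (a^2 + k.factorial) * N := by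
    intro i hi
    rw [iteratedFDerivWithin_of_isOpen (f := g) i isOpen_Ioi htu,
      norm_iteratedFDeriv_eq_norm_iteratedDeriv]
    have hkfac : (1:ℝ) ≤ k.factorial := by exact_mod_cast k.factorial_pos
    cases i with
    | zero =>
      rw [iteratedDeriv_zero]
      simp only [hg_def]
      have hlog : Real.log (1 + f u) ≤ f u := by
        have := Real.log_le_sub_one_of_pos (by linarith : (0:ℝ) < 1 + f u)
        linarith
      have hlog0 : 0 ≤ Real.log (1 + f u) := Real.log_nonneg (by linarith)
      rw [Real.norm_eq_abs, abs_of_nonneg (by positivity)]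
      have h5 : (N:ℝ) * Real.log (1 + f u) ≤ (N:ℝ) * (a^2/N) :=
        mul_le_mul_of_nonneg_left (hlog.trans hfua) (by positivity)
      rw [mul_div_cancel₀ _ (ne_of_gt hNpos)] at h5
      have hN1 : (1:ℝ) ≤ (N:ℝ) := by exact_mod_cast hN
      nlinarith [mul_le_mul_of_nonneg_left hN1 (sq_nonneg a),
        mul_le_mul_of_nonneg_left hN1 (le_trans zero_le_one hkfac)]
    | succ j =>
      have hb := iter_clog_bound (N:ℝ) j (f u) hfu0
      simp only [hg_def]
      rw [Real.norm_eq_abs]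
      have hfacle : (j.factorial : ℝ) ≤ k.factorial := by
        exact_mod_cast Nat.factorial_le (by omega : j ≤ k)
      have habs : |(N:ℝ)| = (N:ℝ) := abs_of_nonneg (by positivity)
      rw [habs] at hb
      nlinarith
  have hD : ∀ i, 1 ≤ i → i ≤ k →
      ‖iteratedFDerivWithin ℝ i f univ u‖ ≤ (max 2 (2*a))^i := by
    intro i h1 h2
    rw [iteratedFDerivWithin_univ]
    simp only [hf_def]
    have hb := norm_iteratedFDeriv_normsq_le i u h1
    have hD2 : (2:ℝ) ≤ max 2 (2*a) := le_max_left _ _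
    have hDpos : (0:ℝ) < max 2 (2*a) := by linarith
    rcases Nat.lt_or_ge i 2 with hlt | hge
    · have hi1 : i = 1 := by omega
      subst hi1
      rw [if_pos rfl] at hb
      have hna : ‖u‖ ≤ a := by
        have h3 := sqrtN_ge_one hN
        have h4 : a / Real.sqrt N ≤ a := div_le_self ha.le h3
        linarith
      calc ‖iteratedFDeriv ℝ 1 (fun x : EuclideanSpace ℂ (Fin m) => ‖x‖^2) u‖
          ≤ 2*‖u‖ := hb
        _ ≤ 2*a := by linarith
        _ ≤ max 2 (2*a) := le_max_right _ _
        _ = (max 2 (2*a))^1 := (pow_one _).symm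
    · rcases Nat.lt_or_ge i 3 with hlt3 | hge3
      · have hi2 : i = 2 := by omega
        subst hi2
        rw [if_neg (by norm_num), if_pos rfl] at hb
        calc ‖iteratedFDeriv ℝ 2 (fun x : EuclideanSpace ℂ (Fin m) => ‖x‖^2) u‖
            ≤ 2 := hb
          _ ≤ (max 2 (2*a))^2 := by nlinarith
      · rw [if_neg (by omega), if_neg (by omega)] at hb
        have hpow : (0:ℝ) ≤ (max 2 (2*a))^i := by positivity
        linarith
  have key := norm_iteratedFDerivWithin_comp_le hg hf (le_refl (k : WithTop ℕ∞))
    (uniqueDiffOn_Ioi _) uniqueDiffOn_univ hst (mem_univ u) hC hD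
  have hcomp : g ∘ f = fFS m N := by
    funext x
    simp [hg_def, hf_def, fFS, Function.comp]
  rw [hcomp, iteratedFDerivWithin_univ] at key
  calc ‖iteratedFDeriv ℝ k (fFS m N) u‖
      ≤ (k.factorial : ℝ) * ((a^2 + k.factorial) * N) * (max 2 (2*a))^k := key
    _ = ((k.factorial : ℝ) * (a^2 + k.factorial) * (max 2 (2*a))^k) * N := by ring

/-! ### Parity: odd-order derivatives vanish at the origin -/

private lemma odd_iteratedFDeriv_zero (m N k : ℕ) (hk : Odd k) :
    iteratedFDeriv ℝ k (fFS m N) 0 = 0 := by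
  set M : EuclideanSpace ℂ (Fin m) →L[ℝ] EuclideanSpace ℂ (Fin m) :=
    -(ContinuousLinearMap.id ℝ (EuclideanSpace ℂ (Fin m))) with hM_def
  have hcomp := M.iteratedFDeriv_comp_right (f := fFS m N)
    (contDiff_fFS m N (k : ℕ∞)) 0 (le_refl (k : WithTop ℕ∞))
  have hM0 : M 0 = 0 := by simp [hM_def]
  have hfM : (fFS m N) ∘ M = fFS m N := by
    funext x
    simp [hM_def, fFS, Function.comp]
  rw [hfM, hM0] at hcomp
  ext v
  have happ := congrFun (congrArg DFunLike.coe hcomp) v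
  rw [ContinuousMultilinearMap.compContinuousLinearMap_apply] at happ
  have hMv : (fun i : Fin k => M (v i)) = fun i : Fin k => (-1:ℝ) • (v i) := by
    funext i; simp [hM_def]
  rw [hMv, ContinuousMultilinearMap.map_smul_univ] at happ
  have hprod : (∏ _i : Fin k, (-1:ℝ)) = (-1:ℝ)^k := by
    rw [Finset.prod_const, Finset.card_univ, Fintype.card_fin]
  rw [hprod, hk.neg_one_pow] at happ
  have hv : iteratedFDeriv ℝ k (fFS m N) 0 v = 0 := by
    have h := happ
    simp only [neg_one_smul] at h
    linarith [h]
  simp [hv]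

private lemma norm_fderiv_iteratedFDeriv' {E F : Type*} [NormedAddCommGroup E]
    [NormedSpace ℝ E] [NormedAddCommGroup F] [NormedSpace ℝ F] (f : E → F) (k : ℕ) (x : E) :
    ‖fderiv ℝ (iteratedFDeriv ℝ k f) x‖ = ‖iteratedFDeriv ℝ (k+1) f x‖ := by
  rw [iteratedFDeriv_succ_eq_comp_left]
  rw [show ((continuousMultilinearCurryLeftEquiv ℝ (fun _ : Fin (k+1) => E) F).symm ∘
      fderiv ℝ (iteratedFDeriv ℝ k f)) x
    = (continuousMultilinearCurryLeftEquiv ℝ (fun _ : Fin (k+1) => E) F).symm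
      (fderiv ℝ (iteratedFDeriv ℝ k f) x) from rfl]
  rw [LinearIsometryEquiv.norm_map]

/-! ### The `O(√N)` bound for odd orders via the mean value inequality -/

private lemma odd_bound (m k N : ℕ) (hN : 1 ≤ N) (hk : Odd k) (a : ℝ) (ha : 0 < a)
    (C : ℝ) (hC0 : 0 ≤ C)
    (hCb : ∀ x : EuclideanSpace ℂ (Fin m), ‖x‖ < a / Real.sqrt N →
      ‖iteratedFDeriv ℝ (k+1) (fFS m N) x‖ ≤ C * N)
    (u : EuclideanSpace ℂ (Fin m)) (hu : ‖u‖ < a / Real.sqrt N) :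
    ‖iteratedFDeriv ℝ k (fFS m N) u‖ ≤ (C * a) * Real.sqrt N := by
  have hs : (0:ℝ) < Real.sqrt N := lt_of_lt_of_le one_pos (sqrtN_ge_one hN)
  have hdiff : Differentiable ℝ (iteratedFDeriv ℝ k (fFS m N)) := by
    apply (contDiff_fFS m N ((k+1 : ℕ) : ℕ∞)).differentiable_iteratedFDeriv
    exact_mod_cast lt_add_one k
  have hbound : ∀ x ∈ Metric.ball (0 : EuclideanSpace ℂ (Fin m)) (a / Real.sqrt N),
      ‖fderiv ℝ (iteratedFDeriv ℝ k (fFS m N)) x‖ ≤ C * N := by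
    intro x hx
    rw [norm_fderiv_iteratedFDeriv']
    exact hCb x (mem_ball_zero_iff.1 hx)
  have h0 : (0 : EuclideanSpace ℂ (Fin m)) ∈
      Metric.ball (0 : EuclideanSpace ℂ (Fin m)) (a / Real.sqrt N) :=
    mem_ball_zero_iff.2 (by rw [norm_zero]; positivity)
  have key := Convex.norm_image_sub_le_of_norm_fderiv_le
    (fun x _ => hdiff.differentiableAt) hbound (convex_ball _ _) h0 (mem_ball_zero_iff.2 hu)
  rw [odd_iteratedFDeriv_zero m N k hk, sub_zero, sub_zero] at key
  have hNs : (N:ℝ) = Real.sqrt N * Real.sqrt N := (Real.mul_self_sqrt (Nat.cast_nonneg N)).symm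
  calc ‖iteratedFDeriv ℝ k (fFS m N) u‖ ≤ C * N * ‖u‖ := key
    _ ≤ C * N * (a / Real.sqrt N) := by
        apply mul_le_mul_of_nonneg_left hu.le (by positivity)
    _ = (C * a) * Real.sqrt N := by
        field_simp
        linear_combination C * hNs

/-! ### The line bridge for lower bounds -/

private lemma line_bridge (m N k : ℕ) (e : EuclideanSpace ℂ (Fin m)) (he : ‖e‖ = 1) (t : ℝ) :
    |iteratedDeriv k (fun s : ℝ => (N:ℝ) * Real.log (1+s^2)) t|
      ≤ ‖iteratedFDeriv ℝ k (fFS m N) (t • e)‖ := by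
  set L : ℝ →L[ℝ] EuclideanSpace ℂ (Fin m) :=
    (ContinuousLinearMap.id ℝ ℝ).smulRight e with hL_def
  have hL : ∀ s : ℝ, L s = s • e := fun s => by simp [hL_def]
  have hcomp := L.iteratedFDeriv_comp_right (f := fFS m N)
    (contDiff_fFS m N (k : ℕ∞)) t (le_refl (k : WithTop ℕ∞))
  have hfun : (fFS m N) ∘ L = fun s : ℝ => (N:ℝ) * Real.log (1+s^2) := by
    funext s
    simp only [Function.comp_apply, hL, fFS]
    rw [norm_smul, he, mul_one, Real.norm_eq_abs, sq_abs]
  rw [hfun] at hcomp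
  rw [iteratedDeriv_eq_iteratedFDeriv, hcomp,
    ContinuousMultilinearMap.compContinuousLinearMap_apply]
  have hLe : (fun i : Fin k => L ((fun _ : Fin k => (1:ℝ)) i)) = fun _ : Fin k => e := by
    funext i; simp [hL]
  rw [hLe]
  have hop := (iteratedFDeriv ℝ k (fFS m N) (L t)).le_opNorm (fun _ : Fin k => e)
  have hprod : (∏ _i : Fin k, ‖e‖) = 1 := by
    rw [Finset.prod_const, he, one_pow]
  rw [hprod, mul_one, hL] at hop
  calc |iteratedFDeriv ℝ k (fFS m N) (L t) (fun _ : Fin k => e)|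
      = ‖iteratedFDeriv ℝ k (fFS m N) (L t) (fun _ : Fin k => e)‖ := (Real.norm_eq_abs _).symm
    _ ≤ ‖iteratedFDeriv ℝ k (fFS m N) (t • e)‖ := by rw [← hL t]; exact hop

/-! ### Lower bounds -/

private lemma lower_even (m : ℕ) (hm : 1 ≤ m) (k : ℕ) (hk2 : 2 ≤ k) (hke : Even k) (N : ℕ) :
    (N:ℝ) ≤ ‖iteratedFDeriv ℝ k (fFS m N) 0‖ := by
  set e : EuclideanSpace ℂ (Fin m) := EuclideanSpace.single (⟨0, by omega⟩ : Fin m) (1:ℂ)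
    with he_def
  have he : ‖e‖ = 1 := by rw [he_def, EuclideanSpace.norm_single]; simp
  have hb := line_bridge m N k e he 0
  rw [zero_smul] at hb
  have hmul := iteratedDeriv_cmul (N:ℝ) _ k (contDiff_logsq k) 0
  rw [hmul, abs_mul, even_value k hk2 hke, abs_of_nonneg (Nat.cast_nonneg N)] at hb
  have h1 : (1:ℝ) ≤ ((k-1).factorial : ℝ) := by exact_mod_cast (k-1).factorial_pos
  nlinarith [Nat.cast_nonneg (α := ℝ) N]

set_option maxHeartbeats 1600000 in
/-- On the ball `‖u‖ < a/√N`, the `k`-th order (real) derivatives of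
`f_N(u) = N log(1+|u|²)` are `O(N)` for `k` even and `O(√N)` for `k` odd, and
these bounds are sharp (achieved up to constants) for `k` even and `k ∈ {1,3}`. -/
theorem stmt8 (m : ℕ) (hm : 1 ≤ m) (a : ℝ) (ha : 0 < a) :
    (∀ k : ℕ, 1 ≤ k → ∃ C > 0, ∀ N : ℕ, 1 ≤ N → ∀ u : EuclideanSpace ℂ (Fin m),
        ‖u‖ < a / Real.sqrt N →
        ‖iteratedFDeriv ℝ k (fFS m N) u‖ ≤
          C * (if Even k then (N : ℝ) else Real.sqrt N)) ∧
    (∀ k : ℕ, 2 ≤ k → Even k → ∃ c > 0, ∀ᶠ N : ℕ in atTop,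
        ∃ u : EuclideanSpace ℂ (Fin m), ‖u‖ < a / Real.sqrt N ∧
          c * (N : ℝ) ≤ ‖iteratedFDeriv ℝ k (fFS m N) u‖) ∧
    (∀ k ∈ ({1, 3} : Set ℕ), ∃ c > 0, ∀ᶠ N : ℕ in atTop,
        ∃ u : EuclideanSpace ℂ (Fin m), ‖u‖ < a / Real.sqrt N ∧
          c * Real.sqrt N ≤ ‖iteratedFDeriv ℝ k (fFS m N) u‖) := by
  refine ⟨?_, ?_, ?_⟩
  · -- Upper bounds
    intro k hk
    set Ce : ℕ → ℝ := fun j => (j.factorial : ℝ) * (a^2 + j.factorial) * (max 2 (2*a))^j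
      with hCe_def
    have hCe_pos : ∀ j, 0 < Ce j := by
      intro j
      have h1 : (0:ℝ) < j.factorial := by exact_mod_cast j.factorial_pos
      have h2 : (0:ℝ) < max 2 (2*a) := lt_of_lt_of_le two_pos (le_max_left _ _)
      simp only [hCe_def]
      positivity
    refine ⟨Ce k + Ce (k+1) * a + 1, by positivity, ?_⟩
    intro N hN u hu
    have hsN : (1:ℝ) ≤ Real.sqrt N := sqrtN_ge_one hN
    have hN1 : (1:ℝ) ≤ (N:ℝ) := by exact_mod_cast hN
    by_cases hke : Even k
    · rw [if_pos hke]
      have h1 := crude_bound m k N hk hN a ha u hu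
      have h1' : ‖iteratedFDeriv ℝ k (fFS m N) u‖ ≤ Ce k * N := by
        rw [hCe_def]; exact h1
      have h2 : 0 < Ce (k+1) * a := mul_pos (hCe_pos (k+1)) ha
      have h3 : Ce (k+1) * a + 1 ≤ (Ce (k+1) * a + 1) * N := by
        nlinarith
      calc ‖iteratedFDeriv ℝ k (fFS m N) u‖ ≤ Ce k * N := h1'
        _ ≤ (Ce k + Ce (k+1) * a + 1) * N := by nlinarith
    · rw [if_neg hke]
      have hko : Odd k := by
        rcases Nat.even_or_odd k with h | h
        · exact absurd h hke
        · exact h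
      have hob := odd_bound m k N hN hko a ha (Ce (k+1)) (hCe_pos (k+1)).le
        (fun x hx => by
          have h5 := crude_bound m (k+1) N (by omega) hN a ha x hx
          rw [hCe_def]
          exact h5) u hu
      have hC2 : 0 < Ce (k+1) := hCe_pos (k+1)
      calc ‖iteratedFDeriv ℝ k (fFS m N) u‖ ≤ (Ce (k+1) * a) * Real.sqrt N := hob
        _ ≤ (Ce k + Ce (k+1) * a + 1) * Real.sqrt N := by
            have h4 : 0 ≤ Real.sqrt N := Real.sqrt_nonneg _
            nlinarith [hCe_pos k]
  · -- Lower bound, even case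
    intro k hk2 hke
    refine ⟨1, one_pos, ?_⟩
    rw [eventually_atTop]
    refine ⟨1, fun N hN => ?_⟩
    have hs : (0:ℝ) < Real.sqrt N := lt_of_lt_of_le one_pos (sqrtN_ge_one hN)
    refine ⟨0, ?_, ?_⟩
    · rw [norm_zero]; positivity
    · rw [one_mul]; exact lower_even m hm k hk2 hke N
  · -- Lower bounds, k = 1 and k = 3
    intro k hk
    set e : EuclideanSpace ℂ (Fin m) := EuclideanSpace.single (⟨0, by omega⟩ : Fin m) (1:ℂ)
      with he_def
    have he : ‖e‖ = 1 := by rw [he_def, EuclideanSpace.norm_single]; simp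
    simp only [Set.mem_insert_iff, Set.mem_singleton_iff] at hk
    rcases hk with hk1 | hk3
    · -- k = 1
      subst hk1
      refine ⟨a / (1 + a^2), by positivity, ?_⟩
      rw [eventually_atTop]
      refine ⟨1, fun N hN => ?_⟩
      have hs1 : (1:ℝ) ≤ Real.sqrt N := sqrtN_ge_one hN
      have hs : (0:ℝ) < Real.sqrt N := by linarith
      set t₀ : ℝ := a / (2 * Real.sqrt N) with ht₀_def
      have ht₀pos : 0 < t₀ := by rw [ht₀_def]; positivity
      have ht₀lt : t₀ < a / Real.sqrt N := by
        rw [ht₀_def]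
        apply div_lt_div_of_pos_left ha (by linarith) (by linarith)
      refine ⟨t₀ • e, ?_, ?_⟩
      · rw [norm_smul, he, mul_one, Real.norm_eq_abs, abs_of_pos ht₀pos]
        exact ht₀lt
      · have hb := line_bridge m N 1 e he t₀
        have hder : iteratedDeriv 1 (fun s : ℝ => (N:ℝ) * Real.log (1+s^2)) t₀
            = (N:ℝ) * (2*t₀/(1+t₀^2)) := by
          rw [iteratedDeriv_one]
          exact ((hasDerivAt_logsq t₀).const_mul (N:ℝ)).deriv
        rw [hder] at hb
        have hval : |(N:ℝ) * (2*t₀/(1+t₀^2))| = (N:ℝ) * (2*t₀/(1+t₀^2)) := by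
          apply abs_of_nonneg
          positivity
        rw [hval] at hb
        refine le_trans ?_ hb
        have hNs : (N:ℝ) = Real.sqrt N * Real.sqrt N :=
          (Real.mul_self_sqrt (Nat.cast_nonneg N)).symm
        have ht₀a : t₀ ≤ a := by
          rw [ht₀_def]
          calc a / (2 * Real.sqrt N) ≤ a / 2 := by
                apply div_le_div_of_nonneg_left ha.le two_pos (by linarith)
            _ ≤ a := by linarith
        have hden : (0:ℝ) < 1 + t₀^2 := by positivity
        have hden2 : 1 + t₀^2 ≤ 1 + a^2 := by nlinarith
        have h2Nt : 2*(N:ℝ)*t₀ = a * Real.sqrt N := by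
          rw [ht₀_def]
          field_simp
          linear_combination hNs
        have hq2 : 2*t₀/(1+a^2) ≤ 2*t₀/(1+t₀^2) :=
          div_le_div_of_nonneg_left (by positivity) hden hden2
        calc a/(1+a^2) * Real.sqrt N = (2*(N:ℝ)*t₀)/(1+a^2) := by
              rw [h2Nt]; ring
          _ = (N:ℝ) * (2*t₀/(1+a^2)) := by ring
          _ ≤ (N:ℝ) * (2*t₀/(1+t₀^2)) :=
              mul_le_mul_of_nonneg_left hq2 (Nat.cast_nonneg N)
    · -- k = 3
      subst hk3
      refine ⟨a, ha, ?_⟩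
      rw [eventually_atTop]
      refine ⟨⌈a^2⌉₊ + 1, fun N hN => ?_⟩
      have hN1 : 1 ≤ N := by omega
      have hNa : a^2 ≤ (N:ℝ) := by
        calc a^2 ≤ (⌈a^2⌉₊ : ℝ) := Nat.le_ceil _
          _ ≤ (N:ℝ) := by exact_mod_cast Nat.le_of_succ_le hN
      have hs1 : (1:ℝ) ≤ Real.sqrt N := sqrtN_ge_one hN1
      have hs : (0:ℝ) < Real.sqrt N := by linarith
      have hsa : a ≤ Real.sqrt N := by
        rw [show a = Real.sqrt (a^2) by rw [Real.sqrt_sq ha.le]]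
        exact Real.sqrt_le_sqrt hNa
      set t₀ : ℝ := a / (2 * Real.sqrt N) with ht₀_def
      have ht₀pos : 0 < t₀ := by rw [ht₀_def]; positivity
      have ht₀lt : t₀ < a / Real.sqrt N := by
        rw [ht₀_def]
        apply div_lt_div_of_pos_left ha (by linarith) (by linarith)
      have ht₀half : t₀ ≤ 1/2 := by
        rw [ht₀_def]
        rw [div_le_iff₀ (by linarith : (0:ℝ) < 2 * Real.sqrt N)]
        nlinarith
      refine ⟨t₀ • e, ?_, ?_⟩
      · rw [norm_smul, he, mul_one, Real.norm_eq_abs, abs_of_pos ht₀pos]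
        exact ht₀lt
      · have hb := line_bridge m N 3 e he t₀
        have hder : iteratedDeriv 3 (fun s : ℝ => (N:ℝ) * Real.log (1+s^2)) t₀
            = (N:ℝ) * ((4*t₀^3-12*t₀)/(1+t₀^2)^3) := by
          rw [iteratedDeriv_cmul (N:ℝ) _ 3 (contDiff_logsq 3) t₀, third_value]
        rw [hder] at hb
        have hden : (0:ℝ) < (1+t₀^2)^3 := by positivity
        have hnumneg : 4*t₀^3 - 12*t₀ ≤ 0 := by nlinarith
        have habs : |(N:ℝ) * ((4*t₀^3-12*t₀)/(1+t₀^2)^3)|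
            = (N:ℝ) * ((12*t₀-4*t₀^3)/(1+t₀^2)^3) := by
          rw [abs_mul, abs_of_nonneg (Nat.cast_nonneg N), abs_div,
            abs_of_nonpos hnumneg, abs_of_nonneg hden.le]
          ring_nf
        rw [habs] at hb
        refine le_trans ?_ hb
        clear hb habs hder hnumneg
        -- a * √N ≤ N * ((12t₀ - 4t₀³)/(1+t₀²)³)
        have ht2 : t₀^2 ≤ 1/4 := by
          nlinarith [mul_nonneg (by linarith : (0:ℝ) ≤ 1/2 - t₀)
            (by linarith : (0:ℝ) ≤ 1/2 + t₀)]
        have hx0 : (0:ℝ) ≤ t₀^2 := sq_nonneg _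
        have hx2 : t₀^2 * t₀^2 ≤ (1/4)*(1/4) := mul_le_mul ht2 ht2 hx0 (by norm_num)
        have hx3 : t₀^2 * t₀^2 * t₀^2 ≤ (1/4)*(1/4)*(1/4) :=
          mul_le_mul hx2 ht2 hx0 (by norm_num)
        have hcube : (1+t₀^2)^3 ≤ 2 := by nlinarith [hx2, hx3, ht2, hx0]
        have hcub2 : 4*t₀^3 ≤ t₀ := by
          nlinarith [mul_le_mul_of_nonneg_left ht2 (by linarith : (0:ℝ) ≤ 4*t₀)]
        have hlow : 4*t₀ ≤ (12*t₀-4*t₀^3)/(1+t₀^2)^3 := by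
          rw [le_div_iff₀ hden]
          have h8 := mul_le_mul_of_nonneg_left hcube (by linarith : (0:ℝ) ≤ 4*t₀)
          nlinarith [h8, hcub2]
        have hNs : (N:ℝ) = Real.sqrt N * Real.sqrt N :=
          (Real.mul_self_sqrt (Nat.cast_nonneg N)).symm
        have h2Nt : 2*(N:ℝ)*t₀ = a * Real.sqrt N := by
          rw [ht₀_def]
          field_simp
          linear_combination hNs
        have hfin : a * Real.sqrt N ≤ (N:ℝ) * (4*t₀) := by
          have hge : (0:ℝ) ≤ a * Real.sqrt N := by positivity
          nlinarith [h2Nt]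
        calc a * Real.sqrt N ≤ (N:ℝ) * (4*t₀) := hfin
          _ ≤ (N:ℝ) * ((12*t₀-4*t₀^3)/(1+t₀^2)^3) := by
              apply mul_le_mul_of_nonneg_left hlow (Nat.cast_nonneg N)

end Main
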